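/- Let G be a commutative group, let n, s ≥ 1, and let {h_{i,j}} (1 ≤ i ≤ n, 1 ≤ j ≤ s) be elements of G such that for every (i_1, …, i_s) ∈ {1, …, n}^s the set {h_{i_1,1}, …, h_{i_s,s}} generates G as a group. Suppose f : G → ℂ and there exist exponential polynomials P_1, …, P_s : G → ℂ such that Δ_{h_{n,k}} ⋯ Δ_{h_{2,k}} Δ_{h_{1,k}} f = P_k for every k = 1, …, s. Then f is an exponential polynomial, i.e. span{τ_h f : h ∈ G} is finite-dimensional over ℂ. -/

import Mathlib

noncomputable section

/-- Forward difference operator: `Δ_h f x = f (x + h) - f x`. -/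
def fwdDiffOp {G M : Type*} [AddCommGroup G] [AddCommGroup M] (h : G) (f : G → M) : G → M :=
  fun x => f (x + h) - f x

/-- Mixed differences along a list of steps; the head of the list is applied outermost,
so `mixedDiff [g_m, …, g_1] f = Δ_{g_m} ⋯ Δ_{g_1} f`. -/
def mixedDiff {G M : Type*} [AddCommGroup G] [AddCommGroup M] : List G → (G → M) → (G → M)
  | [], f => f
  | h :: t, f => fwdDiffOp h (mixedDiff t f)

/-- Translation operator: `τ_h f x = f (x + h)`. -/
def transOp {G M : Type*} [AddCommGroup G] (h : G) (f : G → M) : G → M :=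
  fun x => f (x + h)

/-- The span of all translates of `g`. -/
def tauSpan {G : Type*} [AddCommGroup G] (g : G → ℂ) : Submodule ℂ (G → ℂ) :=
  Submodule.span ℂ (Set.range fun h : G => transOp h g)

/-- `f` is an exponential polynomial iff the span of its translates is finite dimensional. -/
def IsExpPoly {G : Type*} [AddCommGroup G] (f : G → ℂ) : Prop :=
  FiniteDimensional ℂ (tauSpan f)

section Aux
variable {G : Type*} [AddCommGroup G]

lemma transOp_transOp (x y : G) (f : G → ℂ) : transOp x (transOp y f) = transOp (x + y) f := by
  funext z; simp [transOp, add_assoc]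

lemma transOp_zero' (f : G → ℂ) : transOp (0 : G) f = f := by
  funext z; simp [transOp]

lemma fwdDiffOp_comm (a b : G) (f : G → ℂ) :
    fwdDiffOp a (fwdDiffOp b f) = fwdDiffOp b (fwdDiffOp a f) := by
  funext x
  simp only [fwdDiffOp]
  rw [add_right_comm x b a]
  ring

lemma mixedDiff_fwdDiffOp (L : List G) (g : G) (f : G → ℂ) :
    mixedDiff L (fwdDiffOp g f) = fwdDiffOp g (mixedDiff L f) := by
  induction L with
  | nil => rfl
  | cons a t ih =>
    show fwdDiffOp a (mixedDiff t (fwdDiffOp g f)) = _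
    rw [ih, fwdDiffOp_comm]
    rfl

lemma mixedDiff_perm {l₁ l₂ : List G} (p : l₁.Perm l₂) (f : G → ℂ) :
    mixedDiff l₁ f = mixedDiff l₂ f := by
  induction p with
  | nil => rfl
  | cons a _ ih => show fwdDiffOp a _ = fwdDiffOp a _; rw [ih]
  | swap a b l => exact fwdDiffOp_comm _ _ _
  | trans _ _ ih₁ ih₂ => rw [ih₁, ih₂]

lemma transOp_mem_tauSpan (x : G) {v w : G → ℂ} (hw : w ∈ tauSpan v) :
    transOp x w ∈ tauSpan v := by
  induction hw using Submodule.span_induction with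
  | mem w hw =>
    obtain ⟨h, rfl⟩ := hw
    rw [transOp_transOp]
    exact Submodule.subset_span ⟨x + h, rfl⟩
  | zero => exact (show transOp x (0 : G → ℂ) = 0 from rfl) ▸ zero_mem _
  | add a b _ _ ha hb =>
    exact (show transOp x (a + b) = transOp x a + transOp x b from rfl) ▸ add_mem ha hb
  | smul c a _ ha =>
    exact (show transOp x (c • a) = c • transOp x a from rfl) ▸ Submodule.smul_mem _ c ha

lemma self_mem_tauSpan (v : G → ℂ) : v ∈ tauSpan v :=
  Submodule.subset_span ⟨0, transOp_zero' v⟩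

lemma isExpPoly_fwdDiffOp (g : G) {u : G → ℂ} (hu : IsExpPoly u) :
    IsExpPoly (fwdDiffOp g u) := by
  have hle : tauSpan (fwdDiffOp g u) ≤ tauSpan u := by
    rw [tauSpan, Submodule.span_le]
    rintro w ⟨h, rfl⟩
    have : transOp h (fwdDiffOp g u) = transOp (g + h) u - transOp h u := by
      funext x
      show u (x + h + g) - u (x + h) = u (x + (g + h)) - u (x + h)
      rw [add_right_comm x h g, add_assoc]
    show transOp h (fwdDiffOp g u) ∈ tauSpan u
    rw [this]
    exact sub_mem (Submodule.subset_span ⟨g + h, rfl⟩) (Submodule.subset_span ⟨h, rfl⟩)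
  haveI : FiniteDimensional ℂ (tauSpan u) := hu
  exact Submodule.finiteDimensional_of_le hle

lemma isExpPoly_of_gen (u : G → ℂ) (S : Set G) (hfin : S.Finite)
    (hgen : AddSubgroup.closure S = ⊤)
    (hS : ∀ g ∈ S, IsExpPoly (fwdDiffOp g u)) : IsExpPoly u := by
  haveI : Finite S := hfin.to_subtype
  set W : Submodule ℂ (G → ℂ) := ⨆ g : S, tauSpan (fwdDiffOp (g : G) u) with hWdef
  haveI : ∀ g : S, FiniteDimensional ℂ (tauSpan (fwdDiffOp (g : G) u)) := fun g => hS g g.2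
  haveI hWfd : FiniteDimensional ℂ W := Submodule.finiteDimensional_iSup _
  have hWinv : ∀ (x : G) (w : G → ℂ), w ∈ W → transOp x w ∈ W := by
    intro x w hw
    refine Submodule.iSup_induction (motive := fun w => transOp x w ∈ W) _ hw ?_ ?_ ?_
    · intro g v hv
      exact Submodule.mem_iSup_of_mem g (transOp_mem_tauSpan x hv)
    · exact (show transOp x (0 : G → ℂ) = 0 from rfl) ▸ zero_mem W
    · intro a b ha hb
      exact (show transOp x (a + b) = transOp x a + transOp x b from rfl) ▸ add_mem ha hb
  have hall : ∀ x : G, transOp x u - u ∈ W := by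
    let H : AddSubgroup G :=
      { carrier := {x | transOp x u - u ∈ W}
        zero_mem' := by
          show transOp (0 : G) u - u ∈ W
          rw [transOp_zero', sub_self]
          exact zero_mem W
        add_mem' := by
          intro a b ha hb
          show transOp (a + b) u - u ∈ W
          have : transOp (a + b) u - u
              = transOp a (transOp b u - u) + (transOp a u - u) := by
            have h1 : transOp a (transOp b u - u) = transOp (a + b) u - transOp a u := by
              rw [show transOp a (transOp b u - u)
                  = transOp a (transOp b u) - transOp a u from rfl, transOp_transOp]
            rw [h1]; abel
          rw [this]
          exact add_mem (hWinv a _ hb) ha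
        neg_mem' := by
          intro a ha
          show transOp (-a) u - u ∈ W
          have : transOp (-a) u - u = -(transOp (-a) (transOp a u - u)) := by
            rw [show transOp (-a) (transOp a u - u)
                = transOp (-a) (transOp a u) - transOp (-a) u from rfl, transOp_transOp,
                neg_add_cancel, transOp_zero']
            abel
          rw [this]
          exact neg_mem (hWinv (-a) _ ha) }
    have hSH : AddSubgroup.closure S ≤ H := by
      rw [AddSubgroup.closure_le]
      intro g hg
      show transOp g u - u ∈ W
      have : transOp g u - u = fwdDiffOp g u := rfl
      rw [this]
      exact Submodule.mem_iSup_of_mem ⟨g, hg⟩ (self_mem_tauSpan _)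
    intro x
    exact (hgen ▸ hSH) (AddSubgroup.mem_top x)
  have hle : tauSpan u ≤ W ⊔ (ℂ ∙ u) := by
    rw [tauSpan, Submodule.span_le]
    rintro w ⟨x, rfl⟩
    show transOp x u ∈ (W ⊔ (ℂ ∙ u) : Submodule ℂ (G → ℂ))
    have : transOp x u = (transOp x u - u) + u := by abel
    rw [this]
    exact add_mem (Submodule.mem_sup_left (hall x))
      (Submodule.mem_sup_right (Submodule.mem_span_singleton_self u))
  exact Submodule.finiteDimensional_of_le hle

end Aux

lemma montel_key {G : Type*} [AddCommGroup G] {s : ℕ} (hs : 1 ≤ s) :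
    ∀ (N : ℕ) (L : Fin s → List G) (u : G → ℂ),
      (∑ k, (L k).length) ≤ N →
      (∀ c : Fin s → G, (∀ j, c j ∈ L j) → AddSubgroup.closure (Set.range c) = ⊤) →
      (∀ k, IsExpPoly (mixedDiff (L k) u)) →
      IsExpPoly u := by
  intro N
  induction N with
  | zero =>
    intro L u hlen _ hmd
    set k0 : Fin s := ⟨0, hs⟩
    have h0 : (L k0).length = 0 := by
      have h1 : (L k0).length ≤ ∑ k, (L k).length :=
        Finset.single_le_sum (f := fun k => (L k).length) (fun i _ => Nat.zero_le _) (Finset.mem_univ k0)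
      omega
    have hnil : L k0 = [] := List.length_eq_zero_iff.mp h0
    have := hmd k0
    rwa [hnil] at this
  | succ N ih =>
    intro L u hlen hgen hmd
    classical
    by_cases hemp : ∃ k, L k = []
    · obtain ⟨k, hk⟩ := hemp
      have := hmd k
      rwa [hk] at this
    · push_neg at hemp
      have hstep : ∀ (k : Fin s), ∀ g ∈ L k, IsExpPoly (fwdDiffOp g u) := by
        intro k g hg
        set L' := Function.update L k ((L k).erase g) with hL'
        refine ih L' (fwdDiffOp g u) ?_ ?_ ?_
        · -- lengths
          have h1 : ((L k).erase g).length + 1 = (L k).length :=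
            List.length_erase_add_one hg
          have h2 : ∑ j, (L' j).length
              = ((L k).erase g).length + ∑ j ∈ Finset.univ \ {k}, (L j).length := by
            have hup : ∀ j, (L' j).length
                = Function.update (fun j => (L j).length) k ((L k).erase g).length j := by
              intro j
              rw [hL']
              exact Function.apply_update (fun _ l => l.length) L k _ j
            rw [Finset.sum_congr rfl (fun j _ => hup j)]
            exact Finset.sum_update_of_mem (Finset.mem_univ k) _ _
          have h3 : (L k).length + ∑ j ∈ Finset.univ \ {k}, (L j).length
              = ∑ j, (L j).length := by
            rw [Finset.sdiff_singleton_eq_erase]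
            exact Finset.add_sum_erase _ (fun j => (L j).length) (Finset.mem_univ k)
          omega
        · intro c hc
          apply hgen c
          intro j
          by_cases hj : j = k
          · subst hj
            have := hc j
            rw [hL', Function.update_self] at this
            exact List.mem_of_mem_erase this
          · have := hc j
            rwa [hL', Function.update_of_ne hj] at this
        · intro j
          by_cases hj : j = k
          · subst hj
            rw [hL', Function.update_self, mixedDiff_fwdDiffOp]
            have hperm : (L j).Perm (g :: (L j).erase g) := List.perm_cons_erase hg
            have heq : fwdDiffOp g (mixedDiff ((L j).erase g) u) = mixedDiff (L j) u :=
              (mixedDiff_perm hperm u).symm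
            rw [heq]
            exact hmd j
          · rw [hL', Function.update_of_ne hj, mixedDiff_fwdDiffOp]
            exact isExpPoly_fwdDiffOp g (hmd j)
      refine isExpPoly_of_gen u (⋃ k, {x | x ∈ L k}) ?_ ?_ ?_
      · exact Set.finite_iUnion (fun k => (L k).finite_toSet)
      · have hc : ∀ j, (L j).head (hemp j) ∈ L j := fun j => List.head_mem (hemp j)
        have := hgen (fun j => (L j).head (hemp j)) hc
        rw [eq_top_iff, ← this]
        apply AddSubgroup.closure_mono
        rintro x ⟨j, rfl⟩
        exact Set.mem_iUnion.2 ⟨j, hc j⟩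
      · intro g hg
        obtain ⟨k, hk⟩ := Set.mem_iUnion.1 hg
        exact hstep k g hk

/-- **Montel-type theorem for mixed differences (Theorem 2).**
If for every choice `(i_1, …, i_s) ∈ {1, …, n}^s` the set `{h i_1 1, …, h i_s s}` generates the
commutative group `G`, and `Δ_{h n k} ⋯ Δ_{h 1 k} f = P k` with each `P k` an exponential
polynomial, then `f` is an exponential polynomial. -/
theorem montel_mixed {G : Type*} [AddCommGroup G] {n s : ℕ} (hn : 1 ≤ n) (hs : 1 ≤ s)
    (h : Fin n → Fin s → G)
    (hgen : ∀ idx : Fin s → Fin n,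
      AddSubgroup.closure (Set.range fun j : Fin s => h (idx j) j) = ⊤)
    (f : G → ℂ) (P : Fin s → G → ℂ)
    (hP : ∀ k : Fin s, IsExpPoly (P k))
    (hf : ∀ k : Fin s, mixedDiff (List.ofFn fun i : Fin n => h i k).reverse f = P k) :
    IsExpPoly f := by
  classical
  set L : Fin s → List G := fun k => (List.ofFn fun i : Fin n => h i k).reverse with hL
  refine montel_key hs (∑ k, (L k).length) L f le_rfl ?_ ?_
  · intro c hc
    have hex : ∀ j, ∃ i : Fin n, h i j = c j := by
      intro j
      have := hc j
      rw [hL, List.mem_reverse, List.mem_ofFn] at this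
      exact this
    choose idx hidx using hex
    have hrange : Set.range c = Set.range (fun j : Fin s => h (idx j) j) := by
      have : c = fun j : Fin s => h (idx j) j := funext fun j => (hidx j).symm
      rw [this]
    rw [hrange]
    exact hgen idx
  · intro k
    rw [hL, hf k]
    exact hP k
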